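/- There exists C > 0 such that for all x with 0 < x ≤ 1, |x H_1^{(1)}(x)| ≤ C and |(d/dx)[x H_1^{(1)}(x)]| ≤ C; moreover |(d/dx)^2 [x H_1^{(1)}(x)]| ≤ C(1 + |log x|), and for every integer m > 2 there is C_m with |(d/dx)^m [x H_1^{(1)}(x)]| ≤ C_m x^{2-m}. -/

import Mathlib

open MeasureTheory
open MeasureTheory
open Set Filter

/-- The Hankel function of the first kind of order `n`, for positive real
argument, via Watson's contour integral representation
`H_n^{(1)}(z) = (2/(πz))^{1/2} e^{i(z - nπ/2 - π/4)} / Γ(n-1/2)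
  · ∫_0^∞ e^{-u} u^{n-1/2} (1 + iu/(2z))^{n-1/2} du`. -/
noncomputable def hankelH1 (n : ℕ) (z : ℝ) : ℂ :=
  ((2 : ℂ) / ((Real.pi : ℂ) * (z : ℂ))) ^ ((1:ℂ)/2) *
    Complex.exp (Complex.I * ((z : ℂ) - (n : ℂ) * (Real.pi : ℂ) / 2 - (Real.pi : ℂ) / 4)) /
    Complex.Gamma ((n : ℂ) - 1/2) *
    ∫ u in Set.Ioi (0:ℝ),
      Complex.exp (-(u : ℂ)) * (u : ℂ) ^ ((n : ℂ) - 1/2) *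
        (1 + Complex.I * (u : ℂ) / (2 * (z : ℂ))) ^ ((n : ℂ) - 1/2)



noncomputable def HKf (k : ℕ) (x : ℝ) (u : ℝ) : ℂ :=
  Complex.exp (-(u:ℂ)) * (u:ℂ) ^ ((1:ℂ)/2) *
    ((x:ℂ) + Complex.I * (u:ℂ) / 2) ^ ((((1:ℝ)/2 - (k:ℝ)) : ℝ) : ℂ)

noncomputable def HKF (k : ℕ) (x : ℝ) : ℂ := ∫ u in Set.Ioi (0:ℝ), HKf k x u

lemma HK_re (x u : ℝ) : ((x:ℂ) + Complex.I * (u:ℂ) / 2).re = x := by simp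

lemma HK_im (x u : ℝ) : ((x:ℂ) + Complex.I * (u:ℂ) / 2).im = u / 2 := by simp

lemma HK_abs_ge_x {x : ℝ} (hx : 0 < x) (u : ℝ) :
    x ≤ ‖(x:ℂ) + Complex.I * (u:ℂ) / 2‖ := by
  have := Complex.abs_re_le_norm ((x:ℂ) + Complex.I * (u:ℂ) / 2)
  rw [HK_re] at this; exact le_trans (le_abs_self x) this

lemma HK_abs_ge_u {x : ℝ} (hx : 0 < x) {u : ℝ} (hu : 0 < u) :
    u/2 ≤ ‖(x:ℂ) + Complex.I * (u:ℂ) / 2‖ := by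
  have := Complex.abs_im_le_norm ((x:ℂ) + Complex.I * (u:ℂ) / 2)
  rw [HK_im] at this; exact le_trans (le_abs_self _) this

lemma HK_abs_pos {x : ℝ} (hx : 0 < x) (u : ℝ) :
    0 < ‖(x:ℂ) + Complex.I * (u:ℂ) / 2‖ := lt_of_lt_of_le hx (HK_abs_ge_x hx u)

lemma HK_abs_le {x : ℝ} (hx : 0 < x) {u : ℝ} (hu : 0 < u) :
    ‖(x:ℂ) + Complex.I * (u:ℂ) / 2‖ ≤ x + u := by
  refine le_trans (norm_add_le _ _) ?_
  have h2 : ‖Complex.I * (u:ℂ) / 2‖ = u/2 := by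
    simp [abs_of_pos hu]
  rw [Complex.norm_of_nonneg hx.le, h2]; linarith

lemma HK_slit {x : ℝ} (hx : 0 < x) (u : ℝ) :
    ((x:ℂ) + Complex.I * (u:ℂ) / 2) ∈ Complex.slitPlane := by
  rw [Complex.mem_slitPlane_iff, HK_re]; exact Or.inl hx

lemma HKf_norm (k : ℕ) {x u : ℝ} (hx : 0 < x) (hu : 0 < u) :
    ‖HKf k x u‖ = Real.exp (-u) * u ^ ((1:ℝ)/2) *
      (‖(x:ℂ) + Complex.I * (u:ℂ) / 2‖) ^ ((1:ℝ)/2 - (k:ℝ)) := by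
  unfold HKf
  rw [norm_mul, norm_mul,
    Complex.norm_exp, Complex.norm_cpow_real]
  have h1 : ((1:ℂ)/2) = (((1:ℝ)/2 : ℝ) : ℂ) := by norm_num
  rw [h1, Complex.norm_cpow_real]
  simp [abs_of_pos hu]

lemma HK_key_ineq {a u : ℝ} (ha : 0 ≤ a) (hu : 0 ≤ u) :
    u ^ ((1:ℝ)/2) * (a+u) ^ ((1:ℝ)/2) ≤ (1+a) * (1+u) := by
  have h1 : u ^ ((1:ℝ)/2) * (a+u) ^ ((1:ℝ)/2) = (u * (a+u)) ^ ((1:ℝ)/2) := by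
    rw [Real.mul_rpow hu (by linarith)]
  rw [h1]
  have h2 : u * (a+u) ≤ ((1+a) * (1+u))^2 := by nlinarith [mul_nonneg ha hu, sq_nonneg a, sq_nonneg u, mul_nonneg (mul_nonneg ha hu) hu, mul_nonneg (mul_nonneg ha ha) hu]
  calc (u * (a+u)) ^ ((1:ℝ)/2) ≤ (((1+a)*(1+u))^2) ^ ((1:ℝ)/2) :=
        Real.rpow_le_rpow (by positivity) h2 (by norm_num)
    _ = (1+a)*(1+u) := by
        rw [← Real.rpow_natCast ((1+a)*(1+u)) 2, ← Real.rpow_mul (by positivity)]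
        norm_num

lemma HK_base_integrable : IntegrableOn (fun u : ℝ => Real.exp (-u) * (1+u)) (Ioi 0) := by
  have h := Real.GammaIntegral_convergent (by norm_num : (0:ℝ) < 2)
  have h1 : IntegrableOn (fun u : ℝ => Real.exp (-u) * u) (Ioi 0) := by
    have he : (fun u : ℝ => Real.exp (-u) * u) = (fun u : ℝ => Real.exp (-u) * u ^ ((2:ℝ)-1)) := by
      funext u; norm_num
    rw [he]; exact h
  have h2 : IntegrableOn (fun u : ℝ => Real.exp (-u)) (Ioi 0) := by
    simpa using exp_neg_integrableOn_Ioi 0 (by norm_num : (0:ℝ) < 1)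
  have he : (fun u : ℝ => Real.exp (-u) * (1+u)) = (fun u : ℝ => Real.exp (-u) + Real.exp (-u) * u) := by
    funext u; ring
  rw [he]; exact h2.add h1

lemma HK_base_integral : ∫ u in Ioi (0:ℝ), Real.exp (-u) * (1+u) = 2 := by
  have h1 : ∫ u in Ioi (0:ℝ), Real.exp (-u) * u = 1 := by
    have h := Real.Gamma_eq_integral (by norm_num : (0:ℝ) < 2)
    have h2 : Real.Gamma 2 = 1 := by
      rw [show (2:ℝ) = (1:ℕ) + 1 by norm_num, Real.Gamma_nat_eq_factorial]; simp
    rw [h2] at h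
    calc ∫ u in Ioi (0:ℝ), Real.exp (-u) * u
        = ∫ u in Ioi (0:ℝ), Real.exp (-u) * u ^ ((2:ℝ)-1) := by congr 1; funext u; norm_num
      _ = 1 := h.symm
  have h0 : ∫ u in Ioi (0:ℝ), Real.exp (-u) = 1 := integral_exp_neg_Ioi_zero
  have he : (fun u : ℝ => Real.exp (-u) * (1+u)) = (fun u : ℝ => Real.exp (-u) + Real.exp (-u) * u) := by
    funext u; ring
  rw [he, integral_add ?_ ?_]
  · rw [h0, h1]; norm_num
  · have h := exp_neg_integrableOn_Ioi 0 (by norm_num : (0:ℝ) < 1)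
    simp only [neg_mul, one_mul] at h; exact h
  · have h := Real.GammaIntegral_convergent (by norm_num : (0:ℝ) < 2)
    have he2 : (fun u : ℝ => Real.exp (-u) * u) = (fun u : ℝ => Real.exp (-u) * u ^ ((2:ℝ)-1)) := by
      funext u; norm_num
    rw [he2]; exact h

lemma HKf_continuousOn (k : ℕ) {x : ℝ} (hx : 0 < x) :
    ContinuousOn (fun u => HKf k x u) (Ioi (0:ℝ)) := by
  intro u hu
  have hu' : (0:ℝ) < u := hu
  apply ContinuousAt.continuousWithinAt
  unfold HKf
  apply ContinuousAt.mul
  apply ContinuousAt.mul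
  · exact (Complex.continuous_exp.comp (Complex.continuous_ofReal.neg)).continuousAt
  · have hslit : ((u:ℝ):ℂ) ∈ Complex.slitPlane := by
      rw [Complex.mem_slitPlane_iff]; left; simpa using hu'
    exact ContinuousAt.cpow Complex.continuous_ofReal.continuousAt continuousAt_const hslit
  · have hslit := HK_slit hx u
    have hbase : ContinuousAt (fun u : ℝ => (x:ℂ) + Complex.I * (u:ℂ) / 2) u := by
      fun_prop
    exact ContinuousAt.cpow hbase continuousAt_const hslit

lemma HK_rpow_anti {x A : ℝ} (hx : 0 < x) (hA : x ≤ A) {r : ℝ} (hr : r ≤ 0) :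
    A ^ r ≤ x ^ r := by
  have hA0 : 0 < A := lt_of_lt_of_le hx hA
  rw [← neg_neg r, Real.rpow_neg hA0.le, Real.rpow_neg hx.le]
  exact inv_anti₀ (Real.rpow_pos_of_pos hx _) (Real.rpow_le_rpow hx.le hA (by linarith))

lemma HKf_norm_le (k : ℕ) {x u : ℝ} (hx : 0 < x) (hu : 0 < u) :
    ‖HKf k x u‖ ≤ Real.exp (-u) * u ^ ((1:ℝ)/2) * ((x+u) ^ ((1:ℝ)/2) * x ^ (-(k:ℝ))) := by
  rw [HKf_norm k hx hu]
  set A := ‖(x:ℂ) + Complex.I * (u:ℂ) / 2‖ with hA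
  have hA0 : 0 < A := HK_abs_pos hx u
  have hsplit : A ^ ((1:ℝ)/2 - (k:ℝ)) = A ^ ((1:ℝ)/2) * A ^ (-(k:ℝ)) := by
    rw [← Real.rpow_add hA0]; ring_nf
  rw [hsplit]
  have h1 : A ^ ((1:ℝ)/2) ≤ (x+u) ^ ((1:ℝ)/2) :=
    Real.rpow_le_rpow hA0.le (HK_abs_le hx hu) (by norm_num)
  have h2 : A ^ (-(k:ℝ)) ≤ x ^ (-(k:ℝ)) :=
    HK_rpow_anti hx (HK_abs_ge_x hx u) (neg_nonpos.mpr (Nat.cast_nonneg k))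
  have := mul_le_mul h1 h2 (Real.rpow_nonneg hA0.le _) (Real.rpow_nonneg (by linarith) _)
  have hnn : 0 ≤ Real.exp (-u) * u ^ ((1:ℝ)/2) := by positivity
  exact mul_le_mul_of_nonneg_left this hnn

lemma HKf_integrableOn (k : ℕ) {x : ℝ} (hx : 0 < x) :
    IntegrableOn (fun u => HKf k x u) (Ioi 0) := by
  apply Integrable.mono' ((HK_base_integrable.const_mul (x ^ (-(k:ℝ)) * (1+x))))
  · exact (HKf_continuousOn k hx).aestronglyMeasurable measurableSet_Ioi
  · rw [ae_restrict_iff' measurableSet_Ioi]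
    filter_upwards with u
    intro hu
    have hu' : (0:ℝ) < u := hu
    refine le_trans (HKf_norm_le k hx hu') ?_
    have h1 : u ^ ((1:ℝ)/2) * (x+u) ^ ((1:ℝ)/2) ≤ (1+x)*(1+u) := HK_key_ineq hx.le hu'.le
    have h2 : (0:ℝ) < x ^ (-(k:ℝ)) := Real.rpow_pos_of_pos hx _
    calc Real.exp (-u) * u ^ ((1:ℝ)/2) * ((x+u) ^ ((1:ℝ)/2) * x ^ (-(k:ℝ)))
        = (u ^ ((1:ℝ)/2) * (x+u) ^ ((1:ℝ)/2)) * (Real.exp (-u) * x ^ (-(k:ℝ))) := by ring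
      _ ≤ ((1+x)*(1+u)) * (Real.exp (-u) * x ^ (-(k:ℝ))) := by
          apply mul_le_mul_of_nonneg_right h1 (by positivity)
      _ = x ^ (-(k:ℝ)) * (1+x) * (Real.exp (-u) * (1+u)) := by ring

lemma HKf_hasDerivAt (k : ℕ) (u : ℝ) {y : ℝ} (hy : 0 < y) :
    HasDerivAt (fun t : ℝ => HKf k t u)
      (((((1:ℝ)/2 - (k:ℝ)) : ℝ):ℂ) * HKf (k+1) y u) y := by
  set c : ℂ := ((((1:ℝ)/2 - (k:ℝ)) : ℝ):ℂ) with hcdef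
  have hslit := HK_slit hy u
  have hz : HasDerivAt (fun z : ℂ => (z + Complex.I * (u:ℂ) / 2) ^ c)
      (c * ((y:ℂ) + Complex.I * (u:ℂ) / 2) ^ (c - 1) * 1) (y:ℂ) :=
    HasDerivAt.cpow_const ((hasDerivAt_id _).add_const _) hslit
  have hr := (hz.comp_ofReal).const_mul (Complex.exp (-(u:ℂ)) * (u:ℂ) ^ ((1:ℂ)/2))
  have hfe : (fun t : ℝ => Complex.exp (-(u:ℂ)) * (u:ℂ) ^ ((1:ℂ)/2) *
      (((t:ℂ) + Complex.I * (u:ℂ) / 2) ^ c)) = fun t : ℝ => HKf k t u := by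
    funext t; unfold HKf; ring
  rw [hfe] at hr
  have hc : c - 1 = ((((1:ℝ)/2 - ((k+1:ℕ):ℝ)) : ℝ):ℂ) := by
    rw [hcdef]; push_cast; ring
  refine hr.congr_deriv ?_
  unfold HKf
  rw [hc]
  ring

lemma HKF_hasDerivAt (k : ℕ) {x : ℝ} (hx : 0 < x) :
    HasDerivAt (HKF k) (((((1:ℝ)/2 - (k:ℝ)) : ℝ):ℂ) * HKF (k+1) x) x := by
  set c : ℂ := ((((1:ℝ)/2 - (k:ℝ)) : ℝ):ℂ) with hcdef
  have key := hasDerivAt_integral_of_dominated_loc_of_deriv_le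
    (F := fun y u => HKf k y u) (F' := fun y u => c * HKf (k+1) y u)
    (bound := fun u => (‖c‖ * ((x/2) ^ (-((k+1 : ℕ) : ℝ)) * (1+2*x))) * (Real.exp (-u) * (1+u)))
    (x₀ := x) (s := Metric.ball x (x/2)) (μ := volume.restrict (Ioi 0)) (Metric.ball_mem_nhds x (by positivity))
    ?_ ?_ ?_ ?_ ?_ ?_
  · have h2 := key.2
    have : (∫ u in Ioi (0:ℝ), c * HKf (k+1) x u) = c * HKF (k+1) x := by
      rw [MeasureTheory.integral_const_mul]; rfl
    rw [this] at h2
    exact h2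
  · filter_upwards [Ioi_mem_nhds hx] with y hy
    exact ((HKf_continuousOn k hy).aestronglyMeasurable measurableSet_Ioi)
  · exact HKf_integrableOn k hx
  · exact ((HKf_continuousOn (k+1) hx).aestronglyMeasurable measurableSet_Ioi).const_mul c
  · rw [ae_restrict_iff' measurableSet_Ioi]
    filter_upwards with u hu y hy
    have hu' : (0:ℝ) < u := hu
    have hy1 : x/2 < y ∧ y < 3*(x/2) := by
      rw [Metric.mem_ball, Real.dist_eq, abs_lt] at hy
      constructor <;> linarith [hy.1, hy.2]
    have hy0 : 0 < y := lt_trans (by linarith) hy1.1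
    rw [norm_mul]
    have h1 := HKf_norm_le (k+1) hy0 hu'
    have h2 : (y+u) ^ ((1:ℝ)/2) ≤ ((2*x)+u) ^ ((1:ℝ)/2) :=
      Real.rpow_le_rpow (by linarith) (by linarith [hy1.2]) (by norm_num)
    have h3 : y ^ (-((k+1:ℕ):ℝ)) ≤ (x/2) ^ (-((k+1:ℕ):ℝ)) :=
      HK_rpow_anti (by linarith) hy1.1.le (neg_nonpos.mpr (Nat.cast_nonneg _))
    have h4 : u ^ ((1:ℝ)/2) * ((2*x)+u) ^ ((1:ℝ)/2) ≤ (1+2*x)*(1+u) :=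
      HK_key_ineq (by positivity) hu'.le
    have h5 : ‖HKf (k+1) y u‖ ≤ (x/2) ^ (-((k+1:ℕ):ℝ)) * (1+2*x) * (Real.exp (-u) * (1+u)) := by
      refine le_trans h1 ?_
      calc Real.exp (-u) * u ^ ((1:ℝ)/2) * ((y+u) ^ ((1:ℝ)/2) * y ^ (-((k+1:ℕ):ℝ)))
          ≤ Real.exp (-u) * u ^ ((1:ℝ)/2) * (((2*x)+u) ^ ((1:ℝ)/2) * (x/2) ^ (-((k+1:ℕ):ℝ))) := by
            apply mul_le_mul_of_nonneg_left ?_ (by positivity)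
            exact mul_le_mul h2 h3 (Real.rpow_nonneg hy0.le _) (Real.rpow_nonneg (by linarith) _)
        _ = (u ^ ((1:ℝ)/2) * ((2*x)+u) ^ ((1:ℝ)/2)) * (Real.exp (-u) * (x/2) ^ (-((k+1:ℕ):ℝ))) := by ring
        _ ≤ ((1+2*x)*(1+u)) * (Real.exp (-u) * (x/2) ^ (-((k+1:ℕ):ℝ))) := by
            apply mul_le_mul_of_nonneg_right h4
            exact mul_nonneg (Real.exp_nonneg _) (Real.rpow_nonneg (by linarith) _)
        _ = (x/2) ^ (-((k+1:ℕ):ℝ)) * (1+2*x) * (Real.exp (-u) * (1+u)) := by ring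
    calc ‖c‖ * ‖HKf (k+1) y u‖
        ≤ ‖c‖ * ((x/2) ^ (-((k+1:ℕ):ℝ)) * (1+2*x) * (Real.exp (-u) * (1+u))) :=
          mul_le_mul_of_nonneg_left h5 (norm_nonneg _)
      _ = (‖c‖ * ((x/2) ^ (-((k+1:ℕ):ℝ)) * (1+2*x))) * (Real.exp (-u) * (1+u)) := by ring
  · exact HK_base_integrable.const_mul _
  · rw [ae_restrict_iff' measurableSet_Ioi]
    filter_upwards with u hu y hy
    have hy1 : x/2 < y := by
      rw [Metric.mem_ball, Real.dist_eq, abs_lt] at hy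
      linarith [hy.1]
    exact HKf_hasDerivAt k u (by linarith)

lemma HKF_norm_le_integral (k : ℕ) {x : ℝ} (hx : 0 < x) {g : ℝ → ℝ}
    (hg : IntegrableOn g (Ioi 0)) (hle : ∀ u, 0 < u → ‖HKf k x u‖ ≤ g u) :
    ‖HKF k x‖ ≤ ∫ u in Ioi (0:ℝ), g u := by
  refine le_trans (norm_integral_le_integral_norm _) ?_
  exact setIntegral_mono_on ((HKf_integrableOn k hx).norm) hg measurableSet_Ioi
    (fun u hu => hle u hu)

lemma HK_halfpow (u : ℝ) (hu : 0 < u) :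
    u ^ ((1:ℝ)/2) * (u/2) ^ (-((1:ℝ)/2)) = 2 ^ ((1:ℝ)/2) := by
  rw [Real.rpow_neg (by linarith : (0:ℝ) ≤ u/2), ← div_eq_mul_inv,
    ← Real.div_rpow hu.le (by linarith : (0:ℝ) ≤ u/2)]
  congr 1; field_simp

lemma HKf_norm_le2 (k : ℕ) (hk : 1 ≤ k) {x u : ℝ} (hx : 0 < x) (hu : 0 < u) :
    ‖HKf k x u‖ ≤ 2 * x ^ ((1:ℝ) - (k:ℝ)) * Real.exp (-u) := by
  rw [HKf_norm k hx hu]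
  set A := ‖(x:ℂ) + Complex.I * (u:ℂ) / 2‖ with hA
  have hA0 : 0 < A := HK_abs_pos hx u
  have hsplit : A ^ ((1:ℝ)/2 - (k:ℝ)) = A ^ (-((1:ℝ)/2)) * A ^ ((1:ℝ) - (k:ℝ)) := by
    rw [← Real.rpow_add hA0]; ring_nf
  have h1 : A ^ (-((1:ℝ)/2)) ≤ (u/2) ^ (-((1:ℝ)/2)) :=
    HK_rpow_anti (by linarith) (HK_abs_ge_u hx hu) (by norm_num)
  have h2 : A ^ ((1:ℝ) - (k:ℝ)) ≤ x ^ ((1:ℝ) - (k:ℝ)) := by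
    refine HK_rpow_anti hx (HK_abs_ge_x hx u) ?_
    have : (1:ℝ) ≤ (k:ℝ) := by exact_mod_cast hk
    linarith
  calc Real.exp (-u) * u ^ ((1:ℝ)/2) * A ^ ((1:ℝ)/2 - (k:ℝ))
      = Real.exp (-u) * (u ^ ((1:ℝ)/2) * (A ^ (-((1:ℝ)/2)) * A ^ ((1:ℝ) - (k:ℝ)))) := by
        rw [hsplit]; ring
    _ ≤ Real.exp (-u) * (u ^ ((1:ℝ)/2) * ((u/2) ^ (-((1:ℝ)/2)) * x ^ ((1:ℝ) - (k:ℝ)))) := by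
        have h3 : A ^ (-((1:ℝ)/2)) * A ^ ((1:ℝ) - (k:ℝ))
            ≤ (u/2) ^ (-((1:ℝ)/2)) * x ^ ((1:ℝ) - (k:ℝ)) :=
          mul_le_mul h1 h2 (Real.rpow_nonneg hA0.le _)
            (Real.rpow_nonneg (le_of_lt (half_pos hu)) _)
        exact mul_le_mul_of_nonneg_left
          (mul_le_mul_of_nonneg_left h3 (Real.rpow_nonneg hu.le _)) (Real.exp_nonneg _)
    _ = (u ^ ((1:ℝ)/2) * (u/2) ^ (-((1:ℝ)/2))) * x ^ ((1:ℝ) - (k:ℝ)) * Real.exp (-u) := by ring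
    _ ≤ 2 * x ^ ((1:ℝ) - (k:ℝ)) * Real.exp (-u) := by
        rw [HK_halfpow u hu]
        have h3 : (2:ℝ) ^ ((1:ℝ)/2) ≤ 2 := by
          calc (2:ℝ) ^ ((1:ℝ)/2) ≤ 2 ^ (1:ℝ) :=
                Real.rpow_le_rpow_of_exponent_le one_le_two (by norm_num)
            _ = 2 := Real.rpow_one 2
        exact mul_le_mul_of_nonneg_right
          (mul_le_mul_of_nonneg_right h3 (Real.rpow_nonneg hx.le _)) (Real.exp_nonneg _)

lemma HKf_norm_le3 (k : ℕ) (hk : 1 ≤ k) {x u : ℝ} (hx : 0 < x) (hu : 0 < u) :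
    ‖HKf k x u‖ ≤ 2 ^ k * (Real.exp (-u) * u ^ ((1:ℝ) - (k:ℝ))) := by
  rw [HKf_norm k hx hu]
  set A := ‖(x:ℂ) + Complex.I * (u:ℂ) / 2‖ with hA
  have hA0 : 0 < A := HK_abs_pos hx u
  have hk1 : (1:ℝ) ≤ (k:ℝ) := by exact_mod_cast hk
  have h1 : A ^ ((1:ℝ)/2 - (k:ℝ)) ≤ (u/2) ^ ((1:ℝ)/2 - (k:ℝ)) :=
    HK_rpow_anti (half_pos hu) (HK_abs_ge_u hx hu) (by linarith)
  have h2 : (u/2) ^ ((1:ℝ)/2 - (k:ℝ))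
      = u ^ ((1:ℝ)/2 - (k:ℝ)) * 2 ^ ((k:ℝ) - (1:ℝ)/2) := by
    rw [show u/2 = u * (2:ℝ)⁻¹ by ring, Real.mul_rpow hu.le (by norm_num),
      Real.inv_rpow (by norm_num), ← Real.rpow_neg (by norm_num)]
    ring_nf
  have h3 : (2:ℝ) ^ ((k:ℝ) - (1:ℝ)/2) ≤ 2 ^ (k:ℕ) := by
    rw [← Real.rpow_natCast 2 k]
    exact Real.rpow_le_rpow_of_exponent_le one_le_two (by linarith)
  have h4 : u ^ ((1:ℝ)/2) * u ^ ((1:ℝ)/2 - (k:ℝ)) = u ^ ((1:ℝ) - (k:ℝ)) := by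
    rw [← Real.rpow_add hu]; ring_nf
  calc Real.exp (-u) * u ^ ((1:ℝ)/2) * A ^ ((1:ℝ)/2 - (k:ℝ))
      ≤ Real.exp (-u) * u ^ ((1:ℝ)/2) * (u/2) ^ ((1:ℝ)/2 - (k:ℝ)) := by
        refine mul_le_mul_of_nonneg_left h1 ?_
        exact mul_nonneg (Real.exp_nonneg _) (Real.rpow_nonneg hu.le _)
    _ = (u ^ ((1:ℝ)/2) * u ^ ((1:ℝ)/2 - (k:ℝ))) * Real.exp (-u) * 2 ^ ((k:ℝ) - (1:ℝ)/2) := by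
        rw [h2]; ring
    _ = 2 ^ ((k:ℝ) - (1:ℝ)/2) * (Real.exp (-u) * u ^ ((1:ℝ) - (k:ℝ))) := by
        rw [h4]; ring
    _ ≤ 2 ^ (k:ℕ) * (Real.exp (-u) * u ^ ((1:ℝ) - (k:ℝ))) := by
        refine mul_le_mul_of_nonneg_right h3 ?_
        exact mul_nonneg (Real.exp_nonneg _) (Real.rpow_nonneg hu.le _)

lemma HKF_bound0 {x : ℝ} (hx : 0 < x) (hx1 : x ≤ 1) : ‖HKF 0 x‖ ≤ 4 := by
  have hle : ∀ u, 0 < u → ‖HKf 0 x u‖ ≤ 2 * (Real.exp (-u) * (1+u)) := by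
    intro u hu
    refine le_trans (HKf_norm_le 0 hx hu) ?_
    have e0 : x ^ (-((0:ℕ):ℝ)) = 1 := by norm_num
    rw [e0, mul_one]
    have h2 : (x+u) ^ ((1:ℝ)/2) ≤ (1+u) ^ ((1:ℝ)/2) :=
      Real.rpow_le_rpow (by linarith) (by linarith) (by norm_num)
    have h3 : u ^ ((1:ℝ)/2) * (1+u) ^ ((1:ℝ)/2) ≤ (1+1) * (1+u) := by
      exact_mod_cast HK_key_ineq (by norm_num : (0:ℝ) ≤ 1) hu.le
    calc Real.exp (-u) * u ^ ((1:ℝ)/2) * (x+u) ^ ((1:ℝ)/2)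
        ≤ Real.exp (-u) * u ^ ((1:ℝ)/2) * (1+u) ^ ((1:ℝ)/2) := by
          refine mul_le_mul_of_nonneg_left h2 ?_
          exact mul_nonneg (Real.exp_nonneg _) (Real.rpow_nonneg hu.le _)
      _ = (u ^ ((1:ℝ)/2) * (1+u) ^ ((1:ℝ)/2)) * Real.exp (-u) := by ring
      _ ≤ ((1+1) * (1+u)) * Real.exp (-u) :=
          mul_le_mul_of_nonneg_right h3 (Real.exp_nonneg _)
      _ = 2 * (Real.exp (-u) * (1+u)) := by ring
  have h := HKF_norm_le_integral 0 hx (HK_base_integrable.const_mul 2) hle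
  rwa [MeasureTheory.integral_const_mul, HK_base_integral, show (2:ℝ)*2 = 4 by norm_num] at h

lemma HKF_boundk (k : ℕ) (hk : 1 ≤ k) {x : ℝ} (hx : 0 < x) :
    ‖HKF k x‖ ≤ 2 * x ^ ((1:ℝ) - (k:ℝ)) := by
  have hexp : IntegrableOn (fun u : ℝ => Real.exp (-u)) (Ioi 0) := by
    simpa using exp_neg_integrableOn_Ioi 0 (by norm_num : (0:ℝ) < 1)
  have h := HKF_norm_le_integral k hx (hexp.const_mul (2 * x ^ ((1:ℝ) - (k:ℝ))))
    (fun u hu => by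
      have := HKf_norm_le2 k hk hx hu
      calc ‖HKf k x u‖ ≤ 2 * x ^ ((1:ℝ) - (k:ℝ)) * Real.exp (-u) := this
        _ = 2 * x ^ ((1:ℝ) - (k:ℝ)) * Real.exp (-u) := rfl)
  rwa [MeasureTheory.integral_const_mul, integral_exp_neg_Ioi_zero, mul_one] at h

lemma HK_piece1 (k : ℕ) (hk : 1 ≤ k) {x : ℝ} (hx : 0 < x) :
    ∫ u in Ioc (0:ℝ) x, ‖HKf k x u‖ ≤ x ^ ((2:ℝ) - (k:ℝ)) := by
  have hk1 : (1:ℝ) ≤ (k:ℝ) := by exact_mod_cast hk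
  have hgc : Continuous (fun u : ℝ => u ^ ((1:ℝ)/2) * x ^ ((1:ℝ)/2 - (k:ℝ))) :=
    (continuous_id.rpow_const fun _ => Or.inr (by norm_num)).mul continuous_const
  have hmono : ∫ u in Ioc (0:ℝ) x, ‖HKf k x u‖
      ≤ ∫ u in Ioc (0:ℝ) x, u ^ ((1:ℝ)/2) * x ^ ((1:ℝ)/2 - (k:ℝ)) := by
    refine setIntegral_mono_on
      (MeasureTheory.IntegrableOn.mono_set ((HKf_integrableOn k hx).norm) Ioc_subset_Ioi_self)
      (hgc.integrableOn_Ioc) measurableSet_Ioc ?_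
    intro u hu
    have hu0 : 0 < u := hu.1
    rw [HKf_norm k hx hu0]
    have h1 : ‖(x:ℂ) + Complex.I * (u:ℂ) / 2‖ ^ ((1:ℝ)/2 - (k:ℝ))
        ≤ x ^ ((1:ℝ)/2 - (k:ℝ)) :=
      HK_rpow_anti hx (HK_abs_ge_x hx u) (by linarith)
    calc Real.exp (-u) * u ^ ((1:ℝ)/2) * ‖(x:ℂ) + Complex.I * (u:ℂ) / 2‖ ^ ((1:ℝ)/2 - (k:ℝ))
        ≤ Real.exp (-u) * u ^ ((1:ℝ)/2) * x ^ ((1:ℝ)/2 - (k:ℝ)) := by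
          refine mul_le_mul_of_nonneg_left h1 ?_
          exact mul_nonneg (Real.exp_nonneg _) (Real.rpow_nonneg hu0.le _)
      _ ≤ 1 * (u ^ ((1:ℝ)/2) * x ^ ((1:ℝ)/2 - (k:ℝ))) := by
          rw [mul_assoc]
          refine mul_le_mul_of_nonneg_right (Real.exp_le_one_iff.mpr (by linarith : -u ≤ 0)) ?_
          exact mul_nonneg (Real.rpow_nonneg hu0.le _) (Real.rpow_nonneg hx.le _)
      _ = u ^ ((1:ℝ)/2) * x ^ ((1:ℝ)/2 - (k:ℝ)) := one_mul _
  have hval : ∫ u in Ioc (0:ℝ) x, u ^ ((1:ℝ)/2) * x ^ ((1:ℝ)/2 - (k:ℝ))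
      = (2/3) * x ^ ((3:ℝ)/2) * x ^ ((1:ℝ)/2 - (k:ℝ)) := by
    rw [MeasureTheory.integral_mul_const, ← intervalIntegral.integral_of_le hx.le,
      integral_rpow (Or.inl (by norm_num))]
    rw [Real.zero_rpow (by norm_num : (1:ℝ)/2 + 1 ≠ 0)]
    ring_nf
  rw [hval] at hmono
  refine le_trans hmono ?_
  have hx32 : x ^ ((3:ℝ)/2) * x ^ ((1:ℝ)/2 - (k:ℝ)) = x ^ ((2:ℝ) - (k:ℝ)) := by
    rw [← Real.rpow_add hx]; ring_nf
  calc (2/3) * x ^ ((3:ℝ)/2) * x ^ ((1:ℝ)/2 - (k:ℝ))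
      = (2/3) * x ^ ((2:ℝ) - (k:ℝ)) := by rw [mul_assoc, hx32]
    _ ≤ 1 * x ^ ((2:ℝ) - (k:ℝ)) := by
        refine mul_le_mul_of_nonneg_right (by norm_num) (Real.rpow_nonneg hx.le _)
    _ = x ^ ((2:ℝ) - (k:ℝ)) := one_mul _

lemma HK_split (k : ℕ) {x a b : ℝ} (hx : 0 < x) (ha : 0 ≤ a) (hab : a ≤ b) :
    ∫ u in Ioi a, ‖HKf k x u‖ = (∫ u in Ioc a b, ‖HKf k x u‖) + ∫ u in Ioi b, ‖HKf k x u‖ := by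
  rw [← Ioc_union_Ioi_eq_Ioi hab]
  exact setIntegral_union (Ioc_disjoint_Ioi le_rfl) measurableSet_Ioi
    (IntegrableOn.mono_set ((HKf_integrableOn k hx).norm)
      (fun u hu => lt_of_le_of_lt ha hu.1))
    (IntegrableOn.mono_set ((HKf_integrableOn k hx).norm)
      (Ioi_subset_Ioi (le_trans ha hab)))

lemma HK_piece2m (k : ℕ) (hk : 3 ≤ k) {x : ℝ} (hx : 0 < x) :
    ∫ u in Ioi x, ‖HKf k x u‖ ≤ 2^k * x ^ ((2:ℝ) - (k:ℝ)) := by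
  have hk1 : 1 ≤ k := by omega
  have hk3 : (3:ℝ) ≤ (k:ℝ) := by exact_mod_cast hk
  have hlt : ((1:ℝ) - (k:ℝ)) < -1 := by linarith
  have hint : IntegrableOn (fun u:ℝ => u ^ ((1:ℝ)-(k:ℝ))) (Ioi x) :=
    integrableOn_Ioi_rpow_of_lt hlt hx
  have hmono : ∫ u in Ioi x, ‖HKf k x u‖ ≤ ∫ u in Ioi x, 2^k * u ^ ((1:ℝ)-(k:ℝ)) := by
    refine setIntegral_mono_on
      (IntegrableOn.mono_set ((HKf_integrableOn k hx).norm) (Ioi_subset_Ioi hx.le))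
      (hint.const_mul _) measurableSet_Ioi ?_
    intro u hu
    have hu0 : 0 < u := lt_trans hx hu
    refine le_trans (HKf_norm_le3 k hk1 hx hu0) ?_
    refine mul_le_mul_of_nonneg_left ?_ (by positivity)
    calc Real.exp (-u) * u ^ ((1:ℝ)-(k:ℝ))
        ≤ 1 * u ^ ((1:ℝ)-(k:ℝ)) :=
          mul_le_mul_of_nonneg_right (Real.exp_le_one_iff.mpr (by linarith : -u ≤ 0))
            (Real.rpow_nonneg hu0.le _)
      _ = u ^ ((1:ℝ)-(k:ℝ)) := one_mul _
  refine le_trans hmono ?_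
  rw [MeasureTheory.integral_const_mul, integral_Ioi_rpow_of_lt hlt hx]
  have he : ((1:ℝ)-(k:ℝ)) + 1 = (2:ℝ) - (k:ℝ) := by ring
  rw [he]
  have hxp : (0:ℝ) < x ^ ((2:ℝ)-(k:ℝ)) := Real.rpow_pos_of_pos hx _
  have hrw : -x ^ ((2:ℝ)-(k:ℝ)) / ((2:ℝ)-(k:ℝ)) = x ^ ((2:ℝ)-(k:ℝ)) / ((k:ℝ)-2) := by
    rw [show (2:ℝ)-(k:ℝ) = -((k:ℝ)-2) by ring, div_neg, neg_div, neg_neg]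
  rw [hrw]
  refine mul_le_mul_of_nonneg_left ?_ (by positivity)
  exact div_le_self hxp.le (by linarith)

lemma HKF_boundm (k : ℕ) (hk : 3 ≤ k) {x : ℝ} (hx : 0 < x) :
    ‖HKF k x‖ ≤ (1 + 2^k) * x ^ ((2:ℝ) - (k:ℝ)) := by
  have hk1 : 1 ≤ k := by omega
  have h0 : ‖HKF k x‖ ≤ ∫ u in Ioi (0:ℝ), ‖HKf k x u‖ := norm_integral_le_integral_norm _
  rw [HK_split k hx le_rfl hx.le] at h0
  have h1 := HK_piece1 k hk1 hx
  have h2 := HK_piece2m k hk hx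
  calc ‖HKF k x‖ ≤ (∫ u in Ioc (0:ℝ) x, ‖HKf k x u‖) + ∫ u in Ioi x, ‖HKf k x u‖ := h0
    _ ≤ x ^ ((2:ℝ)-(k:ℝ)) + 2^k * x ^ ((2:ℝ)-(k:ℝ)) := add_le_add h1 h2
    _ = (1 + 2^k) * x ^ ((2:ℝ)-(k:ℝ)) := by ring

lemma HKF_bound2 {x : ℝ} (hx : 0 < x) (hx1 : x ≤ 1) :
    ‖HKF 2 x‖ ≤ 7 * (1 + |Real.log x|) := by
  have h0 : ‖HKF 2 x‖ ≤ ∫ u in Ioi (0:ℝ), ‖HKf 2 x u‖ := norm_integral_le_integral_norm _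
  rw [HK_split 2 hx le_rfl hx.le, HK_split 2 hx hx.le hx1] at h0
  have hL0 : 0 ≤ |Real.log x| := abs_nonneg _
  have hlog : |Real.log x| = -Real.log x := abs_of_nonpos (Real.log_nonpos hx.le hx1)
  have e1 : ((1:ℝ) - ((2:ℕ):ℝ)) = -1 := by norm_num
  have hpt : ∀ u : ℝ, 0 < u → ‖HKf 2 x u‖ ≤ 4 * (Real.exp (-u) * u⁻¹) := by
    intro u hu
    have := HKf_norm_le3 2 (by norm_num) hx hu
    rwa [e1, Real.rpow_neg_one, show (2:ℝ)^(2:ℕ) = 4 by norm_num] at this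
  -- piece 1
  have h1 : ∫ u in Ioc (0:ℝ) x, ‖HKf 2 x u‖ ≤ 1 := by
    have := HK_piece1 2 (by norm_num) hx
    rwa [show ((2:ℝ) - ((2:ℕ):ℝ)) = 0 by norm_num, Real.rpow_zero] at this
  -- piece 2
  have h2 : ∫ u in Ioc x 1, ‖HKf 2 x u‖ ≤ 4 * -Real.log x := by
    have hginv : IntegrableOn (fun u:ℝ => 4 * u⁻¹) (Ioc x 1) := by
      refine (IntegrableOn.mono_set ?_ Ioc_subset_Icc_self).const_mul 4
      refine ContinuousOn.integrableOn_Icc ?_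
      exact continuousOn_id.inv₀ (fun u hu => ne_of_gt (lt_of_lt_of_le hx hu.1))
    have hmono : ∫ u in Ioc x 1, ‖HKf 2 x u‖ ≤ ∫ u in Ioc x 1, 4 * u⁻¹ := by
      refine setIntegral_mono_on
        (IntegrableOn.mono_set ((HKf_integrableOn 2 hx).norm)
          (fun u hu => lt_trans hx hu.1))
        hginv measurableSet_Ioc ?_
      intro u hu
      have hu0 : 0 < u := lt_trans hx hu.1
      refine le_trans (hpt u hu0) ?_
      have : Real.exp (-u) * u⁻¹ ≤ 1 * u⁻¹ :=
        mul_le_mul_of_nonneg_right (Real.exp_le_one_iff.mpr (by linarith : -u ≤ 0))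
          (inv_nonneg.mpr hu0.le)
      nlinarith [inv_nonneg.mpr hu0.le]
    refine le_trans hmono ?_
    rw [← intervalIntegral.integral_of_le hx1, intervalIntegral.integral_const_mul,
      integral_inv ?_]
    · rw [one_div, Real.log_inv]
    · rw [Set.uIcc_of_le hx1]
      intro h
      exact absurd h.1 (by linarith)
  -- piece 3
  have h3 : ∫ u in Ioi (1:ℝ), ‖HKf 2 x u‖ ≤ 4 := by
    have hexp : IntegrableOn (fun u : ℝ => Real.exp (-u)) (Ioi 1) := by
      simpa using exp_neg_integrableOn_Ioi 1 (by norm_num : (0:ℝ) < 1)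
    have hmono : ∫ u in Ioi (1:ℝ), ‖HKf 2 x u‖ ≤ ∫ u in Ioi (1:ℝ), 4 * Real.exp (-u) := by
      refine setIntegral_mono_on
        (IntegrableOn.mono_set ((HKf_integrableOn 2 hx).norm)
          (Ioi_subset_Ioi (by linarith)))
        (hexp.const_mul 4) measurableSet_Ioi ?_
      intro u hu
      have hu0 : (0:ℝ) < u := lt_trans one_pos hu
      refine le_trans (hpt u hu0) ?_
      have hinv : u⁻¹ ≤ 1 := by
        rw [inv_le_one_iff₀]; right; exact le_of_lt hu
      nlinarith [Real.exp_nonneg (-u)]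
    refine le_trans hmono ?_
    rw [MeasureTheory.integral_const_mul, integral_exp_neg_Ioi]
    nlinarith [Real.exp_pos (-1:ℝ), Real.exp_le_one_iff.mpr (by norm_num : (-1:ℝ) ≤ 0)]
  calc ‖HKF 2 x‖ ≤ (∫ u in Ioc (0:ℝ) x, ‖HKf 2 x u‖) +
        ((∫ u in Ioc x 1, ‖HKf 2 x u‖) + ∫ u in Ioi (1:ℝ), ‖HKf 2 x u‖) := h0
    _ ≤ 1 + (4 * -Real.log x + 4) := by
        refine add_le_add h1 (add_le_add h2 h3)
    _ ≤ 7 * (1 + |Real.log x|) := by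
        have hL : 0 ≤ -Real.log x := by rw [← hlog]; exact hL0
        rw [hlog]; nlinarith


noncomputable def HKK : ℂ :=
  ((((2/Real.pi) ^ ((1:ℝ)/2)) : ℝ) : ℂ) *
    Complex.exp (Complex.I * (-(Real.pi:ℂ)/2 - (Real.pi:ℂ)/4)) / Complex.Gamma (1 - 1/2)

lemma ofReal_mul_cpow {x : ℝ} (hx : 0 < x) {z : ℂ} (hz : z ≠ 0) (w : ℂ) :
    ((x:ℂ) * z) ^ w = (x:ℂ) ^ w * z ^ w := by
  have hx' : (x:ℂ) ≠ 0 := Complex.ofReal_ne_zero.mpr hx.ne'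
  rw [Complex.cpow_def_of_ne_zero (mul_ne_zero hx' hz),
    Complex.cpow_def_of_ne_zero hx', Complex.cpow_def_of_ne_zero hz,
    ← Complex.exp_add, Complex.log_ofReal_mul hx hz, Complex.ofReal_log hx.le, add_mul]

lemma hankel_eq {x : ℝ} (hx : 0 < x) :
    (x:ℂ) * hankelH1 1 x = HKK * (Complex.exp (Complex.I * x) * HKF 0 x) := by
  have hπ : 0 < Real.pi := Real.pi_pos
  have hxC : (x:ℂ) ≠ 0 := Complex.ofReal_ne_zero.mpr hx.ne'
  have hxr : (0:ℝ) < x ^ ((1:ℝ)/2) := Real.rpow_pos_of_pos hx _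
  -- (a) prefactor
  have ha1 : ((2:ℂ) / ((Real.pi:ℂ) * (x:ℂ))) = (((2/(Real.pi*x)) : ℝ) : ℂ) := by
    push_cast; ring
  have ha2 : ((((2/(Real.pi*x)) : ℝ)):ℂ) ^ ((1:ℂ)/2)
      = ((((2/(Real.pi*x)) ^ ((1:ℝ)/2)) : ℝ) : ℂ) := by
    rw [show ((1:ℂ)/2) = (((1:ℝ)/2 : ℝ) : ℂ) by norm_num]
    rw [← Complex.ofReal_cpow (by positivity)]
  have ha3 : x * (2/(Real.pi*x)) ^ ((1:ℝ)/2) = (2/Real.pi) ^ ((1:ℝ)/2) * x ^ ((1:ℝ)/2) := by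
    rw [show 2/(Real.pi*x) = (2/Real.pi) * x⁻¹ by field_simp,
      Real.mul_rpow (by positivity) (by positivity), Real.inv_rpow hx.le]
    have hxx : x ^ ((1:ℝ)/2) * x ^ ((1:ℝ)/2) = x := by
      rw [← Real.rpow_add hx]; norm_num
    rw [show x * ((2/Real.pi) ^ ((1:ℝ)/2) * (x ^ ((1:ℝ)/2))⁻¹) = (2/Real.pi) ^ ((1:ℝ)/2) * ((x ^ ((1:ℝ)/2) * x ^ ((1:ℝ)/2)) * (x ^ ((1:ℝ)/2))⁻¹) by rw [hxx]; ring]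
    rw [mul_assoc (x ^ ((1:ℝ)/2)), mul_inv_cancel₀ hxr.ne', mul_one]
  -- (b) exponential
  have hb : Complex.exp (Complex.I * ((x:ℂ) - ((1:ℕ):ℂ) * (Real.pi:ℂ) / 2 - (Real.pi:ℂ) / 4))
      = Complex.exp (Complex.I * x) *
        Complex.exp (Complex.I * (-(Real.pi:ℂ)/2 - (Real.pi:ℂ)/4)) := by
    rw [← Complex.exp_add]; congr 1; push_cast; ring
  -- (c) integral
  have hc : ((x ^ ((1:ℝ)/2) : ℝ) : ℂ) *
      (∫ u in Set.Ioi (0:ℝ), Complex.exp (-(u:ℂ)) * (u:ℂ) ^ (((1:ℕ):ℂ) - 1/2) *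
        (1 + Complex.I * (u:ℂ) / (2 * (x:ℂ))) ^ (((1:ℕ):ℂ) - 1/2)) = HKF 0 x := by
    rw [← MeasureTheory.integral_const_mul]
    unfold HKF
    congr 1; funext u
    unfold HKf
    have he : (((1:ℕ):ℂ) - 1/2) = (((1:ℝ)/2 - ((0:ℕ):ℝ) : ℝ) : ℂ) := by push_cast; norm_num
    set w : ℂ := (((1:ℝ)/2 - ((0:ℕ):ℝ) : ℝ) : ℂ) with hw
    rw [he]
    set B : ℂ := 1 + Complex.I * (u:ℂ) / (2 * (x:ℂ)) with hB
    have hmulB : (x:ℂ) * B = (x:ℂ) + Complex.I * (u:ℂ) / 2 := by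
      rw [hB]; field_simp
    have hzne : (x:ℂ) + Complex.I * (u:ℂ) / 2 ≠ 0 := by
      intro h
      have h2 := HK_abs_pos hx u
      rw [h] at h2; simp at h2
    have hBne : B ≠ 0 := by
      intro h; rw [h, mul_zero] at hmulB; exact hzne hmulB.symm
    have hxw : ((x ^ ((1:ℝ)/2) : ℝ) : ℂ) = (x:ℂ) ^ w := by
      rw [hw]
      rw [show (((1:ℝ)/2 - ((0:ℕ):ℝ) : ℝ) : ℂ) = (((1:ℝ)/2 : ℝ) : ℂ) by norm_num]
      rw [← Complex.ofReal_cpow hx.le]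
    have hu2 : (u:ℂ) ^ w = (u:ℂ) ^ ((1:ℂ)/2) := by
      rw [hw]; norm_num
    calc ((x ^ ((1:ℝ)/2) : ℝ) : ℂ) * (Complex.exp (-(u:ℂ)) * (u:ℂ) ^ w * B ^ w)
        = Complex.exp (-(u:ℂ)) * (u:ℂ) ^ w * ((x:ℂ) ^ w * B ^ w) := by rw [hxw]; ring
      _ = Complex.exp (-(u:ℂ)) * (u:ℂ) ^ w * (((x:ℂ) * B) ^ w) := by
          rw [ofReal_mul_cpow hx hBne]
      _ = Complex.exp (-(u:ℂ)) * (u:ℂ) ^ ((1:ℂ)/2) * ((x:ℂ) + Complex.I * (u:ℂ) / 2) ^ w := by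
          rw [hmulB, hu2]
  -- assemble
  have hcast : ((x:ℝ):ℂ) * ((((2/(Real.pi*x)) ^ ((1:ℝ)/2)) : ℝ) : ℂ)
      = ((((2/Real.pi) ^ ((1:ℝ)/2)) : ℝ) : ℂ) * ((x ^ ((1:ℝ)/2) : ℝ) : ℂ) := by
    rw [← Complex.ofReal_mul, ← Complex.ofReal_mul, ha3]
  have hg : (((1:ℕ):ℂ) - 1/2) = (1:ℂ) - 1/2 := by norm_num
  unfold hankelH1 HKK
  rw [hb, ha1, ha2, ← hc, hg]
  linear_combination (Complex.exp (Complex.I * ↑x) *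
    Complex.exp (Complex.I * (-(Real.pi:ℂ)/2 - (Real.pi:ℂ)/4)) /
    Complex.Gamma ((1:ℂ) - 1/2) *
    (∫ u in Set.Ioi (0:ℝ), Complex.exp (-(u:ℂ)) * (u:ℂ) ^ ((1:ℂ) - 1/2) *
      (1 + Complex.I * (u:ℂ) / (2 * (x:ℂ))) ^ ((1:ℂ) - 1/2))) * hcast

noncomputable def HKP (j : ℕ) : ℂ :=
  ∏ l ∈ Finset.range j, ((((1:ℝ)/2 - (l:ℝ)) : ℝ) : ℂ)

noncomputable def HKS (m : ℕ) (x : ℝ) : ℂ :=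
  ∑ j ∈ Finset.range (m+1),
    (((m.choose j : ℕ) : ℂ) * Complex.I ^ (m - j) * HKP j * HKK) *
      (Complex.exp (Complex.I * x) * HKF j x)

lemma HK_hasDerivAt_term (c : ℂ) (j : ℕ) {x : ℝ} (hx : 0 < x) :
    HasDerivAt (fun y : ℝ => c * (Complex.exp (Complex.I * y) * HKF j y))
      (c * Complex.I * (Complex.exp (Complex.I * x) * HKF j x)
        + (c * ((((1:ℝ)/2 - (j:ℝ)) : ℝ) : ℂ)) *
          (Complex.exp (Complex.I * x) * HKF (j+1) x)) x := by
  have hlin : HasDerivAt (fun y : ℝ => Complex.I * (y:ℂ)) Complex.I x := by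
    simpa using (Complex.ofRealCLM.hasDerivAt (x := x)).const_mul Complex.I
  have he : HasDerivAt (fun y : ℝ => Complex.exp (Complex.I * y))
      (Complex.exp (Complex.I * x) * Complex.I) x := hlin.cexp
  have hmul := (he.mul (HKF_hasDerivAt j hx)).const_mul c
  exact hmul.congr_deriv (by ring)

lemma HK_pascal (m : ℕ) (B : ℕ → ℂ) :
    (∑ j ∈ Finset.range (m+1), ((m.choose j : ℕ):ℂ) * B j)
      + ∑ j ∈ Finset.range (m+1), ((m.choose j : ℕ):ℂ) * B (j+1)
    = ∑ j ∈ Finset.range (m+2), (((m+1).choose j : ℕ):ℂ) * B j := by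
  have h1 : ∀ j, (((m+1).choose (j+1) : ℕ):ℂ)
      = ((m.choose j : ℕ):ℂ) + ((m.choose (j+1) : ℕ):ℂ) := by
    intro j; rw [Nat.choose_succ_succ]; push_cast; ring
  have hL1 : ∑ j ∈ Finset.range (m+1), ((m.choose j : ℕ):ℂ) * B j
      = ∑ j ∈ Finset.range m, ((m.choose (j+1) : ℕ):ℂ) * B (j+1)
        + ((m.choose 0 : ℕ):ℂ) * B 0 :=
    Finset.sum_range_succ' (fun j => ((m.choose j : ℕ):ℂ) * B j) m
  have hL2 : ∑ j ∈ Finset.range (m+1), ((m.choose (j+1):ℕ):ℂ) * B (j+1)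
      = ∑ j ∈ Finset.range m, ((m.choose (j+1):ℕ):ℂ) * B (j+1) := by
    rw [Finset.sum_range_succ]
    simp
  rw [Finset.sum_range_succ' (fun j => (((m+1).choose j : ℕ):ℂ) * B j) (m+1)]
  simp only [h1, add_mul, Finset.sum_add_distrib]
  rw [hL1, ← hL2]
  simp [Nat.choose_zero_right]
  ring

lemma HKS_hasDerivAt (m : ℕ) {x : ℝ} (hx : 0 < x) :
    HasDerivAt (fun y => HKS m y) (HKS (m+1) x) x := by
  have hsum : HasDerivAt (fun y => HKS m y)
      (∑ j ∈ Finset.range (m+1),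
        ((((m.choose j : ℕ) : ℂ) * Complex.I ^ (m - j) * HKP j * HKK) * Complex.I *
            (Complex.exp (Complex.I * x) * HKF j x)
          + ((((m.choose j : ℕ) : ℂ) * Complex.I ^ (m - j) * HKP j * HKK) *
              ((((1:ℝ)/2 - (j:ℝ)) : ℝ) : ℂ)) *
            (Complex.exp (Complex.I * x) * HKF (j+1) x))) x := by
    unfold HKS
    exact HasDerivAt.fun_sum (fun j hj => HK_hasDerivAt_term _ j hx)
  convert hsum using 1
  set B : ℕ → ℂ := fun j => Complex.I ^ (m + 1 - j) * HKP j * HKK *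
    (Complex.exp (Complex.I * x) * HKF j x) with hB
  have hrw : ∑ j ∈ Finset.range (m+1),
      ((((m.choose j : ℕ) : ℂ) * Complex.I ^ (m - j) * HKP j * HKK) * Complex.I *
          (Complex.exp (Complex.I * x) * HKF j x)
        + ((((m.choose j : ℕ) : ℂ) * Complex.I ^ (m - j) * HKP j * HKK) *
            ((((1:ℝ)/2 - (j:ℝ)) : ℝ) : ℂ)) *
          (Complex.exp (Complex.I * x) * HKF (j+1) x))
      = (∑ j ∈ Finset.range (m+1), ((m.choose j : ℕ):ℂ) * B j)
        + ∑ j ∈ Finset.range (m+1), ((m.choose j : ℕ):ℂ) * B (j+1) := by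
    rw [← Finset.sum_add_distrib]
    refine Finset.sum_congr rfl ?_
    intro j hj
    rw [Finset.mem_range] at hj
    have hj' : j ≤ m := Nat.lt_succ_iff.mp hj
    congr 1
    · have hp : Complex.I ^ (m - j) * Complex.I = Complex.I ^ (m + 1 - j) := by
        rw [← pow_succ, show m - j + 1 = m + 1 - j by omega]
      rw [hB]
      dsimp only
      rw [← hp]; ring
    · have hp2 : m + 1 - (j + 1) = m - j := by omega
      have hPk : HKP j * ((((1:ℝ)/2 - (j:ℝ)) : ℝ) : ℂ) = HKP (j+1) := by
        rw [HKP, HKP, Finset.prod_range_succ]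
      rw [hB]
      dsimp only
      rw [hp2, ← hPk]; ring
  rw [hrw, HK_pascal m B]
  unfold HKS
  refine Finset.sum_congr rfl ?_
  intro j hj
  rw [hB]; ring

lemma HK_formula (m : ℕ) : ∀ {x : ℝ}, 0 < x →
    iteratedDeriv m (fun y : ℝ => (y:ℂ) * hankelH1 1 y) x = HKS m x := by
  induction m with
  | zero =>
    intro x hx
    rw [iteratedDeriv_zero]
    unfold HKS
    rw [Finset.sum_range_one]
    simp only [Nat.choose_self, Nat.cast_one, pow_zero, Nat.zero_sub]
    rw [show HKP 0 = 1 from Finset.prod_range_zero _]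
    rw [hankel_eq hx]
    ring
  | succ m ih =>
    intro x hx
    rw [iteratedDeriv_succ]
    have hev : iteratedDeriv m (fun y : ℝ => (y:ℂ) * hankelH1 1 y) =ᶠ[nhds x]
        (fun y => HKS m y) := by
      filter_upwards [Ioi_mem_nhds hx] with y hy using ih hy
    rw [hev.deriv_eq]
    exact (HKS_hasDerivAt m hx).deriv

lemma HK_exp_norm (x : ℝ) : ‖Complex.exp (Complex.I * x)‖ = 1 := by
  rw [Complex.norm_exp]
  simp

lemma HKS_norm_le (m : ℕ) {x : ℝ} {M : ℝ} (hM : ∀ j, j ≤ m → ‖HKF j x‖ ≤ M) :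
    ‖HKS m x‖ ≤ (∑ j ∈ Finset.range (m+1), (m.choose j : ℝ) * ‖HKP j‖) * (‖HKK‖ * M) := by
  have hM0 : 0 ≤ M := le_trans (norm_nonneg _) (hM 0 (Nat.zero_le m))
  refine le_trans (norm_sum_le _ _) ?_
  rw [Finset.sum_mul]
  refine Finset.sum_le_sum ?_
  intro j hj
  rw [Finset.mem_range] at hj
  have hj' : j ≤ m := Nat.lt_succ_iff.mp hj
  have hterm : ‖(((m.choose j : ℕ) : ℂ) * Complex.I ^ (m - j) * HKP j * HKK) *
      (Complex.exp (Complex.I * x) * HKF j x)‖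
      = (m.choose j : ℝ) * ‖HKP j‖ * ‖HKK‖ * ‖HKF j x‖ := by
    rw [norm_mul, norm_mul, norm_mul, norm_mul, norm_mul, HK_exp_norm, norm_pow]
    rw [Complex.norm_I, one_pow]
    rw [show ‖((m.choose j : ℕ) : ℂ)‖ = (m.choose j : ℝ) by
      rw [Complex.norm_natCast]]
    ring
  rw [hterm]
  calc (m.choose j : ℝ) * ‖HKP j‖ * ‖HKK‖ * ‖HKF j x‖
      ≤ (m.choose j : ℝ) * ‖HKP j‖ * ‖HKK‖ * M := by
        refine mul_le_mul_of_nonneg_left (hM j hj') ?_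
        exact mul_nonneg (mul_nonneg (Nat.cast_nonneg _) (norm_nonneg _)) (norm_nonneg _)
    _ = (m.choose j : ℝ) * ‖HKP j‖ * (‖HKK‖ * M) := by ring

/-- Smoothness of `x ↦ x H_1^{(1)}(x)` near the origin: the function and its
first derivative are bounded on `(0,1]`, the second derivative is bounded by a
logarithm, and the `m`-th derivative for `m > 2` is bounded by `x^{2-m}`. -/
theorem stmt7 :
    (∃ C > 0, ∀ x : ℝ, 0 < x → x ≤ 1 →
      ‖(x : ℂ) * hankelH1 1 x‖ ≤ C ∧
      ‖deriv (fun y : ℝ => (y : ℂ) * hankelH1 1 y) x‖ ≤ C) ∧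
    (∃ C > 0, ∀ x : ℝ, 0 < x → x ≤ 1 →
      ‖iteratedDeriv 2 (fun y : ℝ => (y : ℂ) * hankelH1 1 y) x‖ ≤
        C * (1 + |Real.log x|)) ∧
    (∀ m : ℕ, 2 < m → ∃ C > 0, ∀ x : ℝ, 0 < x → x ≤ 1 →
      ‖iteratedDeriv m (fun y : ℝ => (y : ℂ) * hankelH1 1 y) x‖ ≤
        C * x ^ ((2:ℝ) - m)) := by
  have hSnn : ∀ n : ℕ, (0:ℝ) ≤ ∑ j ∈ Finset.range (n+1), (n.choose j : ℝ) * ‖HKP j‖ :=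
    fun n => Finset.sum_nonneg (fun j _ => mul_nonneg (Nat.cast_nonneg _) (norm_nonneg _))
  have hF1 : ∀ x : ℝ, 0 < x → ‖HKF 1 x‖ ≤ 4 := by
    intro x hx
    have h := HKF_boundk 1 le_rfl hx
    rw [show (1:ℝ) - ((1:ℕ):ℝ) = 0 by norm_num, Real.rpow_zero, mul_one] at h
    linarith
  refine ⟨?_, ?_, ?_⟩
  · -- part 1
    set S0 := ∑ j ∈ Finset.range 1, ((0:ℕ).choose j : ℝ) * ‖HKP j‖ with hS0
    set S1 := ∑ j ∈ Finset.range 2, ((1:ℕ).choose j : ℝ) * ‖HKP j‖ with hS1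
    have hS0n : 0 ≤ S0 := hSnn 0
    have hS1n : 0 ≤ S1 := hSnn 1
    have hK4 : (0:ℝ) ≤ ‖HKK‖ * 4 := mul_nonneg (norm_nonneg _) (by norm_num)
    refine ⟨(S0 + S1) * (‖HKK‖ * 4) + 1, by nlinarith, ?_⟩
    intro x hx hx1
    have hM0 : ∀ j, j ≤ 0 → ‖HKF j x‖ ≤ 4 := by
      intro j hj; interval_cases j; exact HKF_bound0 hx hx1
    have hM1 : ∀ j, j ≤ 1 → ‖HKF j x‖ ≤ 4 := by
      intro j hj; interval_cases j
      · exact HKF_bound0 hx hx1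
      · exact hF1 x hx
    constructor
    · have h0 : (x:ℂ) * hankelH1 1 x
          = iteratedDeriv 0 (fun y : ℝ => (y:ℂ) * hankelH1 1 y) x := by
        rw [iteratedDeriv_zero]
      rw [h0, HK_formula 0 hx]
      have h := HKS_norm_le 0 hM0
      have hle : ‖HKS 0 x‖ ≤ S0 * (‖HKK‖ * 4) := by rw [hS0]; simpa using h
      nlinarith [mul_nonneg hS1n hK4]
    · rw [← iteratedDeriv_one, HK_formula 1 hx]
      have h := HKS_norm_le 1 hM1
      have hle : ‖HKS 1 x‖ ≤ S1 * (‖HKK‖ * 4) := by rw [hS1]; simpa using h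
      nlinarith [mul_nonneg hS0n hK4]
  · -- part 2
    set S2 := ∑ j ∈ Finset.range 3, ((2:ℕ).choose j : ℝ) * ‖HKP j‖ with hS2
    have hS2n : 0 ≤ S2 := hSnn 2
    have hK7 : (0:ℝ) ≤ ‖HKK‖ * 7 := mul_nonneg (norm_nonneg _) (by norm_num)
    refine ⟨S2 * (‖HKK‖ * 7) + 1, by nlinarith, ?_⟩
    intro x hx hx1
    have hL : 0 ≤ |Real.log x| := abs_nonneg _
    have hM : ∀ j, j ≤ 2 → ‖HKF j x‖ ≤ 7 * (1 + |Real.log x|) := by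
      intro j hj; interval_cases j
      · have := HKF_bound0 hx hx1; nlinarith
      · have := hF1 x hx; nlinarith
      · exact HKF_bound2 hx hx1
    rw [HK_formula 2 hx]
    have h := HKS_norm_le 2 hM
    calc ‖HKS 2 x‖ ≤ S2 * (‖HKK‖ * (7 * (1 + |Real.log x|))) := h
      _ = (S2 * (‖HKK‖ * 7)) * (1 + |Real.log x|) := by ring
      _ ≤ (S2 * (‖HKK‖ * 7) + 1) * (1 + |Real.log x|) :=
          mul_le_mul_of_nonneg_right (by linarith) (by linarith)
  · -- part 3
    intro m hm
    have hm3 : 3 ≤ m := hm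
    set S := ∑ j ∈ Finset.range (m+1), (m.choose j : ℝ) * ‖HKP j‖ with hS
    have hSn : 0 ≤ S := hSnn m
    have h2m : (0:ℝ) ≤ 2^m := by positivity
    have hKm : (0:ℝ) ≤ ‖HKK‖ * (4 + 2^m) :=
      mul_nonneg (norm_nonneg _) (by positivity)
    refine ⟨S * (‖HKK‖ * (4 + 2^m)) + 1, by nlinarith, ?_⟩
    intro x hx hx1
    have hcast3 : (3:ℝ) ≤ (m:ℝ) := by exact_mod_cast hm3
    have hge1 : (1:ℝ) ≤ x ^ ((2:ℝ) - (m:ℝ)) := by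
      rw [show (1:ℝ) = x ^ (0:ℝ) from (Real.rpow_zero x).symm]
      exact Real.rpow_le_rpow_of_exponent_ge hx hx1 (by linarith)
    have hxp : 0 ≤ x ^ ((2:ℝ) - (m:ℝ)) := Real.rpow_nonneg hx.le _
    have hM : ∀ j, j ≤ m → ‖HKF j x‖ ≤ (4 + 2^m) * x ^ ((2:ℝ) - (m:ℝ)) := by
      intro j hj
      rcases Nat.eq_zero_or_pos j with h0 | h1
      · subst h0
        have := HKF_bound0 hx hx1
        nlinarith
      · by_cases hjm : j = m
        · subst hjm
          have := HKF_boundm j hm3 hx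
          nlinarith
        · have hjlt : j < m := lt_of_le_of_ne hj hjm
          have hble := HKF_boundk j h1 hx
          have hexple : x ^ ((1:ℝ) - (j:ℝ)) ≤ x ^ ((2:ℝ) - (m:ℝ)) := by
            refine Real.rpow_le_rpow_of_exponent_ge hx hx1 ?_
            have : (j:ℝ) + 1 ≤ (m:ℝ) := by exact_mod_cast hjlt
            linarith
          have hxj : 0 ≤ x ^ ((1:ℝ) - (j:ℝ)) := Real.rpow_nonneg hx.le _
          nlinarith
    rw [HK_formula m hx]
    have h := HKS_norm_le m hM
    calc ‖HKS m x‖ ≤ S * (‖HKK‖ * ((4 + 2^m) * x ^ ((2:ℝ) - (m:ℝ)))) := h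
      _ = (S * (‖HKK‖ * (4 + 2^m))) * x ^ ((2:ℝ) - (m:ℝ)) := by ring
      _ ≤ (S * (‖HKK‖ * (4 + 2^m)) + 1) * x ^ ((2:ℝ) - (m:ℝ)) :=
          mul_le_mul_of_nonneg_right (by linarith) hxp
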